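/- For every real-valued continuously differentiable function u on ℝ³ whose support is compact and contained in Ω, one has ∫_{ℝ³} |∂u/∂x₁(x₁,x₂,x₃)|² dx₁dx₂dx₃ ≥ ∫_{ℝ³} f̃(x₁)|u(x₁,x₂,x₃)|² dx₁dx₂dx₃. (The variant of Lemma 3.1 for a monotone rotation angle, stated in Section 4.1 of the paper with the modified function f̃ from (tildef).) -/

import Mathlib

open Real Set Filter MeasureTheory intervalIntegral Topology


private lemma cot_alg (c S C : ℝ) (hne : S ≠ 0) (hsq : S^2 + C^2 = 1) :
    -c*(1 + (C/S)^2) = (-S * c * S - C * (C * c)) / S ^ 2 := by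
  field_simp
  nlinarith [hsq, sq_nonneg S, sq_nonneg C]

lemma aux_poincare' (v : ℝ → ℝ) (hv : ContDiff ℝ 1 v) (a b : ℝ) (hab : a < b)
    (ha : v a = 0) (hb : v b = 0) :
    (π / (b - a))^2 * ∫ t in a..b, (v t)^2 ≤ ∫ t in a..b, (deriv v t)^2 := by
  obtain ⟨L, hLdef⟩ : ∃ L, L = b - a := ⟨_, rfl⟩
  have hL : 0 < L := by rw [hLdef]; linarith
  obtain ⟨c, hcdef⟩ : ∃ c, c = π / L := ⟨_, rfl⟩
  have hc : 0 < c := hcdef ▸ div_pos pi_pos hL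
  have hcL : c * L = π := by rw [hcdef]; field_simp
  have hvc : Continuous v := hv.continuous
  obtain ⟨dv, hdvdef⟩ : ∃ dv, dv = deriv v := ⟨_, rfl⟩
  have hdvc : Continuous dv := hdvdef ▸ hv.continuous_deriv le_rfl
  have hd : ∀ x, HasDerivAt v (dv x) x := fun x =>
    hdvdef ▸ (hv.differentiable one_ne_zero x).hasDerivAt
  obtain ⟨w, hwdef⟩ : ∃ w : ℝ → ℝ, w = fun t => cos (c*(t-a)) / sin (c*(t-a)) := ⟨_, rfl⟩
  have hsin : ∀ t ∈ Ioo a b, 0 < sin (c*(t-a)) := by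
    intro t ht
    apply sin_pos_of_pos_of_lt_pi
    · exact mul_pos hc (by linarith [ht.1])
    · calc c * (t - a) < c * L := by
            apply mul_lt_mul_of_pos_left _ hc
            rw [hLdef]; linarith [ht.2]
        _ = π := hcL
  have hwcont : ContinuousOn w (Ioo a b) := by
    rw [hwdef]
    apply ContinuousOn.div
    · exact (Real.continuous_cos.comp (by continuity)).continuousOn
    · exact (Real.continuous_sin.comp (by continuity)).continuousOn
    · exact fun x hx => (hsin x hx).ne'
  have hw' : ∀ t ∈ Ioo a b, HasDerivAt w (-c*(1 + (w t)^2)) t := by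
    intro t ht
    have h1 : HasDerivAt (fun t => c*(t-a)) c t := by
      simpa using ((hasDerivAt_id t).sub_const a).const_mul c
    have hcosd : HasDerivAt (fun t => cos (c*(t-a))) (-sin (c*(t-a)) * c) t :=
      (Real.hasDerivAt_cos _).comp t h1
    have hsind : HasDerivAt (fun t => sin (c*(t-a))) (cos (c*(t-a)) * c) t :=
      (Real.hasDerivAt_sin _).comp t h1
    have hne := (hsin t ht).ne'
    have h2 : HasDerivAt (fun t => cos (c*(t-a)) / sin (c*(t-a))) _ t := hcosd.div hsind hne
    rw [hwdef]
    simpa only [← cot_alg c _ _ hne (sin_sq_add_cos_sq (c*(t-a)))] using h2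
  -- key finite-interval inequality
  have ineq : ∀ α β, a < α → α ≤ β → β < b →
      c*(w β * (v β)^2 - w α * (v α)^2) ≤ ∫ t in α..β, ((dv t)^2 - c^2 * (v t)^2) := by
    intro α β hαa hαβ hβb
    have huIcc : Set.uIcc α β = Icc α β := uIcc_of_le hαβ
    have hsub : Icc α β ⊆ Ioo a b := fun x hx => ⟨lt_of_lt_of_le hαa hx.1, lt_of_le_of_lt hx.2 hβb⟩
    have cw : ContinuousOn w (Icc α β) := hwcont.mono hsub
    have i1 : IntervalIntegrable (fun t => (dv t - c * w t * v t)^2) volume α β := by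
      apply ContinuousOn.intervalIntegrable
      rw [huIcc]
      exact ((hdvc.continuousOn.sub ((continuousOn_const.mul cw).mul hvc.continuousOn)).pow 2)
    have i2 : IntervalIntegrable (fun t => w t * (2 * v t * dv t)) volume α β := by
      apply ContinuousOn.intervalIntegrable
      rw [huIcc]
      exact cw.mul ((continuousOn_const.mul hvc.continuousOn).mul hdvc.continuousOn)
    have i3 : IntervalIntegrable (fun t => (1+(w t)^2) * (v t)^2) volume α β := by
      apply ContinuousOn.intervalIntegrable
      rw [huIcc]
      exact (continuousOn_const.add (cw.pow 2)).mul (hvc.continuousOn.pow 2)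
    have ibp : ∫ t in α..β, w t * (2 * v t * dv t)
        = w β * (v β)^2 - w α * (v α)^2 - ∫ t in α..β, (-c*(1+(w t)^2)) * (v t)^2 := by
      apply intervalIntegral.integral_mul_deriv_eq_deriv_mul
      · intro x hx; exact hw' x (hsub (huIcc ▸ hx))
      · intro x hx
        have : HasDerivAt (fun β => v β ^ 2) _ x := (hd x).pow 2
        simpa [pow_one, mul_comm, mul_assoc, mul_left_comm] using this
      · apply ContinuousOn.intervalIntegrable; rw [huIcc]
        exact continuousOn_const.mul (continuousOn_const.add (cw.pow 2))
      · exact ((continuous_const.mul hvc).mul hdvc).intervalIntegrable _ _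
    have e2 : ∫ t in α..β, (-c*(1+(w t)^2)) * (v t)^2
        = -c * ∫ t in α..β, (1+(w t)^2) * (v t)^2 := by
      rw [← intervalIntegral.integral_const_mul]
      apply integral_congr
      intro t _; ring
    have expand : ∫ t in α..β, ((dv t)^2 - c^2 * (v t)^2)
        = (∫ t in α..β, (dv t - c * w t * v t)^2)
          + c * (∫ t in α..β, w t * (2 * v t * dv t))
          - c^2 * (∫ t in α..β, (1+(w t)^2) * (v t)^2) := by
      rw [← intervalIntegral.integral_const_mul, ← intervalIntegral.integral_const_mul,
        ← integral_add i1 (i2.const_mul c),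
        ← integral_sub ((i1.add (i2.const_mul c))) (i3.const_mul (c^2))]
      apply integral_congr
      intro t _
      ring
    have h0 : 0 ≤ ∫ t in α..β, (dv t - c * w t * v t)^2 :=
      integral_nonneg hαβ (fun t _ => sq_nonneg _)
    rw [expand, ibp, e2]
    have hr : (∫ t in α..β, (dv t - c * w t * v t)^2)
        + c * (w β * (v β)^2 - w α * (v α)^2
            - -c * ∫ t in α..β, (1+(w t)^2) * (v t)^2)
        - c^2 * (∫ t in α..β, (1+(w t)^2) * (v t)^2)
        = (∫ t in α..β, (dv t - c * w t * v t)^2)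
          + c * (w β * (v β)^2 - w α * (v α)^2) := by ring
    rw [hr]
    linarith [h0]
  -- the primitive and its continuity
  have hint : Continuous (fun t => (dv t)^2 - c^2*(v t)^2) :=
    (hdvc.pow 2).sub (continuous_const.mul (hvc.pow 2))
  obtain ⟨P, hPdef⟩ : ∃ P : ℝ → ℝ, P = fun x => ∫ t in a..x, ((dv t)^2 - c^2 * (v t)^2) :=
    ⟨_, rfl⟩
  have hPc : Continuous P := by
    rw [hPdef]
    have hii : ∀ p q : ℝ, IntervalIntegrable (fun t => (dv t)^2 - c^2*(v t)^2) volume p q :=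
      fun p q => hint.intervalIntegrable (μ := volume) p q
    exact intervalIntegral.continuous_primitive hii a
  have hPab : ∀ α β : ℝ, P β - P α = ∫ t in α..β, ((dv t)^2 - c^2*(v t)^2) := by
    intro α β
    have h := intervalIntegral.integral_add_adjacent_intervals
      (hint.intervalIntegrable (μ := volume) a α) (hint.intervalIntegrable (μ := volume) α β)
    rw [hPdef]
    simp only []
    linarith [h]
  -- Lipschitz bound for v
  obtain ⟨C0, hC0⟩ := (isCompact_Icc (a := a) (b := b)).exists_bound_of_continuousOn
    hdvc.continuousOn
  have hC0nn : 0 ≤ C0 := le_trans (norm_nonneg _) (hC0 a ⟨le_rfl, hab.le⟩)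
  have hlip : ∀ x ∈ Icc a b, ∀ y ∈ Icc a b, |v y - v x| ≤ C0 * |y - x| := by
    intro x hx y hy
    have := (convex_Icc a b).norm_image_sub_le_of_norm_hasDerivWithin_le
      (f := v) (f' := dv) (fun z hz => (hd z).hasDerivWithinAt) hC0 hx hy
    simpa [Real.norm_eq_abs] using this
  -- sequences
  obtain ⟨d, hddef⟩ : ∃ d : ℕ → ℝ, d = fun n : ℕ => L/(4*((n:ℝ)+1)) := ⟨_, rfl⟩
  have hdpos : ∀ n, 0 < d n := by
    intro n; rw [hddef]
    apply div_pos hL; positivity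
  have hdle : ∀ n, d n ≤ L/4 := by
    intro n; rw [hddef]
    simp only []
    have hn : (0:ℝ) ≤ (n:ℝ) := Nat.cast_nonneg n
    rw [div_le_div_iff₀ (by positivity) (by norm_num)]
    nlinarith [hL]
  obtain ⟨α, hαdef⟩ : ∃ α : ℕ → ℝ, α = fun n => a + d n := ⟨_, rfl⟩
  obtain ⟨β, hβdef⟩ : ∃ β : ℕ → ℝ, β = fun n => b - d n := ⟨_, rfl⟩
  have hαmem : ∀ n, a < α n := by
    intro n; rw [hαdef]; simp only []; linarith [hdpos n]
  have hβmem : ∀ n, β n < b := by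
    intro n; rw [hβdef]; simp only []; linarith [hdpos n]
  have hαβ : ∀ n, α n ≤ β n := by
    intro n; rw [hαdef, hβdef]; simp only []
    have h1 := hdle n
    rw [hLdef] at h1
    linarith [hdpos n]
  have hαIcc : ∀ n, α n ∈ Icc a b := fun n => ⟨(hαmem n).le, le_trans (hαβ n) (hβmem n).le⟩
  have hβIcc : ∀ n, β n ∈ Icc a b := fun n => ⟨le_trans (hαmem n).le (hαβ n), (hβmem n).le⟩
  -- sine lower bound at distance d from the endpoints
  have hsinlow : ∀ n : ℕ, ∀ x : ℝ, x - a = d n ∨ b - x = d n → 2/π * (c * d n) ≤ sin (c*(x-a)) := by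
    intro n x hx
    have hcd1 : c * d n ≤ π/2 := by
      have : c * d n ≤ c * (L/4) := mul_le_mul_of_nonneg_left (hdle n) hc.le
      have h4 : c * (L/4) = π/4 := by
        field_simp at hcL ⊢
        linarith [hcL]
      rw [h4] at this
      linarith [this, pi_pos]
    have hcdnn : 0 ≤ c * d n := le_of_lt (mul_pos hc (hdpos n))
    rcases hx with h | h
    · rw [show x - a = d n from h]
      exact mul_le_sin hcdnn hcd1
    · have : c * (x - a) = π - c * (b - x) := by
        have : x - a = L - (b - x) := by rw [hLdef]; ring
        rw [this, mul_sub, hcL]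
      rw [this, Real.sin_pi_sub, h]
      exact mul_le_sin hcdnn hcd1
  -- bound |w x * v x ^ 2| ≤ K * d n at both sequence points
  obtain ⟨K, hKdef⟩ : ∃ K, K = C0^2 * π / (2*c) := ⟨_, rfl⟩
  have hKnn : 0 ≤ K := by
    rw [hKdef]; positivity
  have hbound : ∀ n : ℕ, ∀ x : ℝ, x ∈ Icc a b → (x - a = d n ∧ v a = 0 ∨ b - x = d n ∧ v b = 0) →
      |w x * (v x)^2| ≤ K * d n := by
    intro n x hx hcase
    have hsx : 2/π * (c * d n) ≤ sin (c*(x-a)) := by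
      rcases hcase with ⟨h, _⟩ | ⟨h, _⟩
      · exact hsinlow n x (Or.inl h)
      · exact hsinlow n x (Or.inr h)
    have hcd : 0 < c * d n := mul_pos hc (hdpos n)
    have h2π : (0:ℝ) < 2/π * (c * d n) := mul_pos (by positivity) hcd
    have hsxpos : 0 < sin (c*(x-a)) := lt_of_lt_of_le h2π hsx
    have hvx : |v x| ≤ C0 * d n := by
      rcases hcase with ⟨h, h0⟩ | ⟨h, h0⟩
      · have := hlip a ⟨le_rfl, hab.le⟩ x hx
        rw [h0, sub_zero] at this
        have habs : |x - a| = d n := by rw [abs_of_nonneg (by linarith [hdpos n] : (0:ℝ) ≤ x - a), h]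
        rw [habs] at this; exact this
      · have := hlip b ⟨hab.le, le_rfl⟩ x hx
        rw [h0, sub_zero] at this
        have habs : |x - b| = d n := by
          rw [abs_of_nonpos (by linarith [hdpos n] : x - b ≤ 0)]
          linarith [h]
        rw [habs] at this; exact this
    have hwx : |w x| ≤ 1 / sin (c*(x-a)) := by
      rw [hwdef]
      simp only []
      rw [abs_div, abs_of_pos hsxpos]
      gcongr
      exact abs_cos_le_one _
    have h1s : 1 / sin (c*(x-a)) ≤ π / (2 * (c * d n)) := by
      have := one_div_le_one_div_of_le h2π hsx
      calc 1 / sin (c*(x-a)) ≤ 1 / (2/π * (c * d n)) := this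
        _ = π / (2 * (c * d n)) := by
            rw [div_mul_eq_mul_div, one_div_div]
    calc |w x * (v x)^2| = |w x| * |v x|^2 := by rw [abs_mul, abs_pow]
      _ ≤ (π / (2 * (c * d n))) * (C0 * d n)^2 := by
          have hcd : 0 < c * d n := mul_pos hc (hdpos n)
          apply mul_le_mul (hwx.trans h1s) _ (by positivity) _
          · exact pow_le_pow_left₀ (abs_nonneg _) hvx 2
          · positivity
      _ = K * d n := by
          rw [hKdef]
          have hdn := (hdpos n).ne'
          have hcn := hc.ne'
          field_simp
  -- per-point bounds along the sequences
  have hβb : ∀ n, |w (β n) * (v (β n))^2| ≤ K * d n := by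
    intro n
    apply hbound n (β n) (hβIcc n)
    right
    constructor
    · rw [hβdef]; ring
    · exact hb
  have hαb : ∀ n, |w (α n) * (v (α n))^2| ≤ K * d n := by
    intro n
    apply hbound n (α n) (hαIcc n)
    left
    constructor
    · rw [hαdef]; ring
    · exact ha
  -- limits
  have htendd : Tendsto d atTop (𝓝 0) := by
    rw [hddef]
    have h := tendsto_one_div_add_atTop_nhds_zero_nat.const_mul (L/4)
    rw [mul_zero] at h
    have h2 : (fun n : ℕ => L/(4*((n:ℝ)+1))) = fun n : ℕ => (L/4) * (1/((n:ℝ)+1)) := by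
      funext n
      have : ((n:ℝ)+1) ≠ 0 := by positivity
      field_simp
    rw [h2]
    exact h
  have htendKd : Tendsto (fun n => K * d n) atTop (𝓝 0) := by
    have := htendd.const_mul K
    rwa [mul_zero] at this
  have htendβ : Tendsto (fun n => w (β n) * (v (β n))^2) atTop (𝓝 0) :=
    squeeze_zero_norm (fun n => by rw [Real.norm_eq_abs]; exact hβb n) htendKd
  have htendα : Tendsto (fun n => w (α n) * (v (α n))^2) atTop (𝓝 0) :=
    squeeze_zero_norm (fun n => by rw [Real.norm_eq_abs]; exact hαb n) htendKd
  have hLHS : Tendsto (fun n => c*(w (β n) * (v (β n))^2 - w (α n) * (v (α n))^2)) atTop (𝓝 0) := by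
    have := (htendβ.sub htendα).const_mul c
    simpa using this
  have hαt : Tendsto α atTop (𝓝 a) := by
    rw [hαdef]
    have := htendd.const_add a
    simpa using this
  have hβt : Tendsto β atTop (𝓝 b) := by
    rw [hβdef]
    have := (tendsto_const_nhds (x := b) (f := atTop (α := ℕ))).sub htendd
    simpa using this
  have hRHS : Tendsto (fun n => P (β n) - P (α n)) atTop (𝓝 (P b - P a)) :=
    ((hPc.tendsto b).comp hβt).sub ((hPc.tendsto a).comp hαt)
  have key : (0:ℝ) ≤ P b - P a := by
    apply le_of_tendsto_of_tendsto' hLHS hRHS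
    intro n
    rw [hPab]
    exact ineq (α n) (β n) (hαmem n) (hαβ n) (hβmem n)
  have hPa : P a = 0 := by rw [hPdef]; simp
  have hPb : P b = (∫ t in a..b, (dv t)^2) - c^2 * ∫ t in a..b, (v t)^2 := by
    rw [hPdef]
    simp only []
    rw [integral_sub (f := fun t => dv t ^ 2) (g := fun t => c^2 * v t ^ 2) ((hdvc.pow 2).intervalIntegrable a b)
      ((continuous_const.mul (hvc.pow 2)).intervalIntegrable a b),
      intervalIntegral.integral_const_mul]
  have hcc : π/(b-a) = c := by rw [hcdef, hLdef]
  rw [← hdvdef, hcc]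
  linarith [key, hPa, hPb]

lemma aux_II_mul {f g : ℝ → ℝ} (hfi : ∀ a b : ℝ, IntervalIntegrable f volume a b)
    (hg : Continuous g) : ∀ a b : ℝ, IntervalIntegrable (fun x => f x * g x) volume a b := by
  have key : ∀ a b : ℝ, a ≤ b → IntervalIntegrable (fun x => f x * g x) volume a b := by
    intro a b h
    rw [intervalIntegrable_iff_integrableOn_Icc_of_le h]
    exact ((intervalIntegrable_iff_integrableOn_Icc_of_le h).mp (hfi a b)).mul_continuousOn
      hg.continuousOn isCompact_Icc
  intro a b
  rcases le_total a b with h | h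
  · exact key a b h
  · exact (key b a h).symm

lemma aux_core (θ θ' : ℝ → ℝ)
    (hθ : ∀ x, HasDerivAt θ (θ' x) x) (hθ'c : Continuous θ')
    (hpos : ∀ x, 0 ≤ θ' x)
    (hmonoP : MonotoneOn θ' (Set.Ici 0))
    (θinvp : ℝ → ℝ)
    (hinvp : ∀ α, θ 0 ≤ α →
      0 ≤ θinvp α ∧ θ (θinvp α) = α ∧ ∀ z, 0 ≤ z → θ z = α → θinvp α ≤ z)
    (f : ℝ → ℝ)
    (hf₁ : ∀ x, θinvp (θ 0 + 2 * π) ≤ x → f x = (θ' (θinvp (θ x - π))) ^ 2)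
    (hf0 : ∀ x, 0 ≤ x → x < θinvp (θ 0 + 2 * π) → f x = 0)
    (hfi : ∀ a b : ℝ, IntervalIntegrable f volume a b)
    (v : ℝ → ℝ) (hv : ContDiff ℝ 1 v) (hsupp : HasCompactSupport v)
    (φ : ℝ) (hvz : ∀ t, Real.cos (θ t + φ) = 0 → v t = 0) :
    ∫ t in Ici (0:ℝ), f t * (v t)^2 ≤ ∫ t in Ici (0:ℝ), (deriv v t)^2 := by
  have hvc : Continuous v := hv.continuous
  have hdvc : Continuous (deriv v) := hv.continuous_deriv le_rfl
  obtain ⟨a0, ha0def⟩ : ∃ a0, a0 = θinvp (θ 0 + 2 * π) := ⟨_, rfl⟩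
  obtain ⟨ha0nn, ha0val, -⟩ := hinvp (θ 0 + 2*π) (by linarith [pi_pos])
  rw [← ha0def] at ha0nn ha0val
  have hθm : Monotone θ :=
    monotone_of_deriv_nonneg (fun x => (hθ x).differentiableAt)
      (fun x => by rw [(hθ x).deriv]; exact hpos x)
  have hθcont : Continuous θ := (Differentiable.continuous (fun x => (hθ x).differentiableAt))
  have hinvmono : ∀ α β, θ 0 ≤ α → α ≤ β → θinvp α ≤ θinvp β := by
    intro α β hα hβ
    obtain ⟨hb0, hbv, -⟩ := hinvp β (le_trans hα hβ)
    obtain ⟨-, -, hamin⟩ := hinvp α hα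
    have hmem : α ∈ Icc (θ 0) (θ (θinvp β)) := ⟨hα, by rw [hbv]; exact hβ⟩
    obtain ⟨z, hz, hzv⟩ := intermediate_value_Icc hb0 hθcont.continuousOn hmem
    exact le_trans (hamin z hz.1 hzv) hz.2
  -- the levels
  obtain ⟨k₀, hk₀⟩ : ∃ k₀ : ℤ, k₀ = ⌈(θ 0 + φ - π/2)/π⌉ := ⟨_, rfl⟩
  obtain ⟨ℓ, hℓdef⟩ : ∃ ℓ : ℕ → ℝ, ℓ = fun k : ℕ => π/2 - φ + ((k₀:ℝ) + (k:ℝ))*π := ⟨_, rfl⟩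
  have hℓstep : ∀ k : ℕ, ℓ (k+1) = ℓ k + π := by
    intro k; rw [hℓdef]; push_cast; ring
  have hℓ0ge : θ 0 ≤ ℓ 0 := by
    have h1 : (θ 0 + φ - π/2)/π ≤ (k₀ : ℝ) := by rw [hk₀]; exact Int.le_ceil _
    rw [div_le_iff₀ pi_pos] at h1
    rw [hℓdef]; push_cast; nlinarith [pi_pos]
  have hℓ0lt : ℓ 0 < θ 0 + π := by
    have h1 : (k₀ : ℝ) < (θ 0 + φ - π/2)/π + 1 := by
      rw [hk₀]; exact Int.ceil_lt_add_one _
    rw [hℓdef]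
    push_cast
    have := pi_pos
    rw [div_add' _ _ _ this.ne'] at h1
    rw [lt_div_iff₀ this] at h1
    nlinarith
  have hℓge : ∀ k, θ 0 ≤ ℓ k := by
    intro k
    induction k with
    | zero => exact hℓ0ge
    | succ n ih => rw [hℓstep]; linarith [pi_pos]
  obtain ⟨s, hsdef⟩ : ∃ s : ℕ → ℝ, s = fun k => θinvp (ℓ k) := ⟨_, rfl⟩
  have hs0 : ∀ k, 0 ≤ s k := fun k => by rw [hsdef]; exact (hinvp _ (hℓge k)).1
  have hsval : ∀ k, θ (s k) = ℓ k := fun k => by rw [hsdef]; exact (hinvp _ (hℓge k)).2.1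
  have hsmono : ∀ k, s k ≤ s (k+1) := by
    intro k; rw [hsdef]
    exact hinvmono _ _ (hℓge k) (by rw [hℓstep]; linarith [pi_pos])
  have hvs : ∀ k, v (s k) = 0 := by
    intro k
    apply hvz
    rw [hsval, hℓdef]
    simp only []
    rw [Real.cos_eq_zero_iff]
    exact ⟨k₀ + k, by push_cast; ring⟩
  have hs0a0 : s 0 < a0 := by
    by_contra h
    push_neg at h
    have := hθm h
    rw [ha0val, hsval] at this
    linarith [hℓ0lt, pi_pos]
  have hfvI : ∀ a b : ℝ, IntervalIntegrable (fun t => f t * (v t)^2) volume a b :=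
    aux_II_mul hfi (hvc.pow 2)
  have hdv2c : Continuous (fun t => (deriv v t)^2) := hdvc.pow 2
  -- per-interval estimate
  have key : ∀ k, (∫ t in (s k)..(s (k+1)), f t * (v t)^2)
      ≤ ∫ t in (s k)..(s (k+1)), (deriv v t)^2 := by
    intro k
    rcases eq_or_lt_of_le (hsmono k) with heq | hlt
    · rw [← heq]; simp
    · obtain ⟨L, hLdef⟩ : ∃ L, L = s (k+1) - s k := ⟨_, rfl⟩
      have hL : 0 < L := by rw [hLdef]; linarith
      have hbound : ∀ t ∈ Icc (s k) (s (k+1)), f t ≤ (π/L)^2 := by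
        intro t ht
        by_cases hta : a0 ≤ t
        · rw [hf₁ t (ha0def ▸ hta)]
          have h1 : θ t - π ≤ ℓ k := by
            have h2 := hθm ht.2
            rw [hsval (k+1), hℓstep] at h2
            linarith
          have h2 : θ 0 ≤ θ t - π := by
            have h3 := hθm hta
            rw [ha0val] at h3
            linarith [pi_pos]
          have hz : θinvp (θ t - π) ≤ s k := by
            have h4 := hinvmono _ _ h2 h1
            rw [hsdef]
            exact h4
          have hz0 : 0 ≤ θinvp (θ t - π) := (hinvp _ h2).1
          have hmono1 : θ' (θinvp (θ t - π)) ≤ θ' (s k) :=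
            hmonoP hz0 (hs0 k) hz
          have hπL : θ' (s k) * L ≤ π := by
            have hFTC : (∫ x in (s k)..(s (k+1)), θ' x) = π := by
              rw [intervalIntegral.integral_eq_sub_of_hasDerivAt
                (fun x _ => hθ x) (hθ'c.intervalIntegrable _ _)]
              rw [hsval, hsval, hℓstep]
              ring
            have hmon : ∀ x ∈ Icc (s k) (s (k+1)), θ' (s k) ≤ θ' x := by
              intro x hx
              exact hmonoP (hs0 k) (le_trans (hs0 k) hx.1) hx.1
            have hcst : (∫ x in (s k)..(s (k+1)), θ' (s k)) = θ' (s k) * L := by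
              rw [intervalIntegral.integral_const, smul_eq_mul, hLdef]
              ring
            calc θ' (s k) * L = ∫ x in (s k)..(s (k+1)), θ' (s k) := hcst.symm
              _ ≤ ∫ x in (s k)..(s (k+1)), θ' x :=
                  intervalIntegral.integral_mono_on hlt.le
                    (intervalIntegrable_const) (hθ'c.intervalIntegrable _ _) hmon
              _ = π := hFTC
          have h5 : θ' (s k) ≤ π / L := (le_div_iff₀ hL).mpr hπL
          calc (θ' (θinvp (θ t - π)))^2 ≤ (θ' (s k))^2 :=
                pow_le_pow_left₀ (hpos _) hmono1 2
            _ ≤ (π/L)^2 := pow_le_pow_left₀ (hpos _) h5 2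
        · push_neg at hta
          rw [hf0 t (le_trans (hs0 k) ht.1) (ha0def ▸ hta)]
          positivity
      have hpoin := aux_poincare' v hv (s k) (s (k+1)) hlt (hvs k) (hvs (k+1))
      rw [← hLdef] at hpoin
      have hfv : (∫ t in (s k)..(s (k+1)), f t * (v t)^2)
          ≤ ∫ t in (s k)..(s (k+1)), (π/L)^2 * (v t)^2 := by
        apply intervalIntegral.integral_mono_on hlt.le (hfvI _ _)
          ((continuous_const.mul (hvc.pow 2)).intervalIntegrable _ _)
        intro t ht
        exact mul_le_mul_of_nonneg_right (hbound t ht) (sq_nonneg _)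
      rw [intervalIntegral.integral_const_mul] at hfv
      exact le_trans hfv hpoin
  -- summation by induction
  have sum : ∀ K : ℕ, (∫ t in (0:ℝ)..(s K), f t * (v t)^2)
      ≤ ∫ t in (0:ℝ)..(s K), (deriv v t)^2 := by
    intro K
    induction K with
    | zero =>
      have hzero : (∫ t in (0:ℝ)..(s 0), f t * (v t)^2) = 0 := by
        have : EqOn (fun t => f t * (v t)^2) (fun _ => (0:ℝ)) (Set.uIcc 0 (s 0)) := by
          intro t ht
          rw [uIcc_of_le (hs0 0)] at ht
          simp only []
          rw [hf0 t ht.1 (lt_of_le_of_lt ht.2 (ha0def ▸ hs0a0))]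
          ring
        rw [intervalIntegral.integral_congr this]
        simp
      rw [hzero]
      exact intervalIntegral.integral_nonneg (hs0 0) (fun t _ => sq_nonneg _)
    | succ K ih =>
      rw [← intervalIntegral.integral_add_adjacent_intervals
          (hfvI 0 (s K)) (hfvI (s K) (s (K+1))),
        ← intervalIntegral.integral_add_adjacent_intervals
          (hdv2c.intervalIntegrable 0 (s K)) (hdv2c.intervalIntegrable (s K) (s (K+1)))]
      exact add_le_add ih (key K)
  -- choose K beyond the support
  obtain ⟨M, hM⟩ : ∃ M, ∀ t, M < |t| → v t = 0 := by
    obtain ⟨M, hM⟩ := hsupp.isBounded.subset_closedBall 0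
    refine ⟨M, fun t ht => ?_⟩
    by_contra h
    have := hM (subset_tsupport v (by simpa using h))
    rw [Metric.mem_closedBall, Real.dist_eq, sub_zero] at this
    linarith
  obtain ⟨K, hK⟩ : ∃ K : ℕ, θ (max M 0) + 1 ≤ ℓ K := by
    obtain ⟨K, hK⟩ := exists_nat_ge ((θ (max M 0) + 1 - π/2 + φ)/π - (k₀:ℝ))
    refine ⟨K, ?_⟩
    rw [hℓdef]
    have hπ := pi_pos
    rw [sub_le_iff_le_add, div_le_iff₀ hπ] at hK
    nlinarith
  have hsK : max M 0 ≤ s K := by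
    by_contra h
    push_neg at h
    have := hθm h.le
    rw [hsval] at this
    linarith
  have hvzero : ∀ t, s K < t → v t = 0 := by
    intro t ht
    apply hM
    have h1 : max M 0 < t := lt_of_le_of_lt hsK ht
    rw [abs_of_pos (lt_of_le_of_lt (le_max_right M 0) h1)]
    exact lt_of_le_of_lt (le_max_left M 0) h1
  -- assemble over Ici 0
  have hIfv : IntegrableOn (fun t => f t * (v t)^2) (Ici (0:ℝ)) := by
    have h1 : IntegrableOn (fun t => f t * (v t)^2) (Icc 0 (s K)) :=
      (intervalIntegrable_iff_integrableOn_Icc_of_le (hs0 K)).mp (hfvI 0 (s K))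
    have h2 : IntegrableOn (fun t => f t * (v t)^2) (Ioi (s K)) := by
      apply (integrableOn_zero (μ := volume)).congr_fun _ measurableSet_Ioi
      intro x hx
      show (0:ℝ) = f x * v x ^ 2
      rw [hvzero x hx]
      ring
    rw [← Icc_union_Ioi_eq_Ici (hs0 K)]
    exact h1.union h2
  have hIdv : Integrable (fun t => (deriv v t)^2) := by
    apply hdv2c.integrable_of_hasCompactSupport
    exact (hsupp.deriv).comp_left (g := fun x : ℝ => x^2) (by simp)
  have hsplit : ∫ t in Ici (0:ℝ), f t * (v t)^2
      = ∫ t in (0:ℝ)..(s K), f t * (v t)^2 := by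
    rw [← Icc_union_Ioi_eq_Ici (hs0 K),
      setIntegral_union ((Set.Iic_disjoint_Ioi le_rfl).mono_left Icc_subset_Iic_self)
        measurableSet_Ioi
        ((intervalIntegrable_iff_integrableOn_Icc_of_le (hs0 K)).mp (hfvI 0 (s K)))
        (by
          apply (integrableOn_zero (μ := volume)).congr_fun _ measurableSet_Ioi
          intro x hx
          show (0:ℝ) = f x * v x ^ 2
          rw [hvzero x hx]
          ring)]
    have hz : ∫ t in Ioi (s K), f t * (v t)^2 = 0 := by
      rw [setIntegral_congr_fun measurableSet_Ioi
        (fun x hx => by show f x * v x ^ 2 = 0; rw [hvzero x hx]; ring : EqOn _ (fun _ => (0:ℝ)) _)]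
      simp
    rw [hz, add_zero, intervalIntegral.integral_of_le (hs0 K),
      ← integral_Icc_eq_integral_Ioc]
  have hfinal : ∫ t in (0:ℝ)..(s K), (deriv v t)^2 ≤ ∫ t in Ici (0:ℝ), (deriv v t)^2 := by
    rw [intervalIntegral.integral_of_le (hs0 K)]
    apply setIntegral_mono_set hIdv.integrableOn
    · exact Filter.Eventually.of_forall (fun x => sq_nonneg _)
    · exact HasSubset.Subset.eventuallyLE (fun x hx => le_of_lt hx.1)
  rw [hsplit]
  exact le_trans (sum K) hfinal

lemma aux_int1d (f g : ℝ → ℝ) (hf : Measurable f) (hfnn : ∀ x, 0 ≤ f x)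
    (hfb : ∀ r : ℝ, ∃ C, ∀ x, |x| ≤ r → f x ≤ C)
    (hg : Continuous g) (hgs : HasCompactSupport g) :
    Integrable (fun x => f x * (g x)^2) := by
  obtain ⟨R, hR⟩ := hgs.isBounded.subset_closedBall 0
  obtain ⟨C, hC⟩ := hfb |R|
  obtain ⟨D, hD⟩ := hgs.exists_bound_of_continuous hg
  have hCnn : 0 ≤ C := le_trans (hfnn 0) (hC 0 (by simp))
  apply Integrable.mono' (g := (Icc (-|R|) |R|).indicator (fun _ => C * D^2))
  · exact (integrable_indicator_iff measurableSet_Icc).mpr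
      (integrableOn_const measure_Icc_lt_top.ne)
  · exact (hf.mul ((hg.pow 2).measurable)).aestronglyMeasurable
  · apply Eventually.of_forall
    intro x
    by_cases hx : x ∈ Icc (-|R|) |R|
    · rw [indicator_of_mem hx]
      rw [Real.norm_eq_abs, abs_mul, abs_of_nonneg (hfnn x), abs_pow]
      apply mul_le_mul (hC x (abs_le.mpr ⟨hx.1, hx.2⟩)) _ (by positivity) hCnn
      apply pow_le_pow_left₀ (abs_nonneg _) _ 2
      exact hD x
    · rw [indicator_of_notMem hx]
      have hgx : g x = 0 := by
        by_contra h
        have h2 := hR (subset_tsupport g h)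
        rw [Metric.mem_closedBall, Real.dist_eq, sub_zero] at h2
        have h3 := abs_le.mp (le_trans h2 (le_abs_self R))
        exact hx ⟨h3.1, h3.2⟩
      rw [hgx]
      simp

/-- The variant of Lemma 3.1 for a monotone rotation angle (Section 4.1): with `θ' ≥ 0`
everywhere, `θ'` increasing on `[0,∞)` and decreasing on `(−∞,0]`, `|θ'| → ∞` at infinity
(so `θ → +∞` at `+∞` and `θ → −∞` at `−∞`), every continuously differentiable `u : ℝ³ → ℝ`
with compact support contained in the twisted tube `Ω` satisfies
`∫_{ℝ³} |∂u/∂x₁|² ≥ ∫_{ℝ³} f̃(x₁)|u|²`, with the modified function `f̃` from (tildef). -/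
theorem hardy_type_estimate_monotone
    (ω : Set (ℝ × ℝ)) (hω_ne : ω.Nonempty) (hω_bdd : Bornology.IsBounded ω)
    (hω_open : IsOpen ω) (hω_conn : IsConnected ω)
    (hω_half : ω ⊆ {y : ℝ × ℝ | 0 < y.1})
    (θ θ' : ℝ → ℝ)
    (hθ : ∀ x, HasDerivAt θ (θ' x) x) (hθ'c : Continuous θ')
    (hpos : ∀ x, 0 ≤ θ' x)
    (hmonoP : MonotoneOn θ' (Set.Ici 0)) (hmonoM : AntitoneOn θ' (Set.Iic 0))
    (hinf : Tendsto (fun x => |θ' x|) (cocompact ℝ) atTop)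
    (Ω : Set (ℝ × ℝ × ℝ))
    (hΩ : Ω = (fun q : ℝ × ℝ × ℝ =>
      (q.1, q.2.1 * Real.cos (θ q.1) + q.2.2 * Real.sin (θ q.1),
       q.2.2 * Real.cos (θ q.1) - q.2.1 * Real.sin (θ q.1))) '' (Set.univ ×ˢ ω))
    (θinvp θinvm : ℝ → ℝ)
    (hinvp : ∀ α, θ 0 ≤ α →
      0 ≤ θinvp α ∧ θ (θinvp α) = α ∧ ∀ z, 0 ≤ z → θ z = α → θinvp α ≤ z)
    (hinvm : ∀ β, β ≤ θ 0 →
      θinvm β ≤ 0 ∧ θ (θinvm β) = β ∧ ∀ z, z ≤ 0 → θ z = β → z ≤ θinvm β)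
    (ftilde : ℝ → ℝ)
    (hf₁ : ∀ x, θinvp (θ 0 + 2 * π) ≤ x → ftilde x = (θ' (θinvp (θ x - π))) ^ 2)
    (hf₂ : ∀ x, x ≤ θinvm (θ 0 - 2 * π) → ftilde x = (θ' (θinvm (θ x + π))) ^ 2)
    (hf₃ : ∀ x, θinvm (θ 0 - 2 * π) < x → x < θinvp (θ 0 + 2 * π) → ftilde x = 0)
    (u : ℝ × ℝ × ℝ → ℝ)
    (hu : ContDiff ℝ 1 u)
    (husupp : HasCompactSupport u)
    (huΩ : tsupport u ⊆ Ω) :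
    ∫ p : ℝ × ℝ × ℝ, ftilde p.1 * (u p) ^ 2 ≤
      ∫ p : ℝ × ℝ × ℝ, (deriv (fun t => u (t, p.2)) p.1) ^ 2 := by
  have hπ := pi_pos
  have hθm : Monotone θ :=
    monotone_of_deriv_nonneg (fun x => (hθ x).differentiableAt)
      (fun x => by rw [(hθ x).deriv]; exact hpos x)
  have hθcont : Continuous θ := Differentiable.continuous (fun x => (hθ x).differentiableAt)
  obtain ⟨ha0nn, ha0val, ha0min⟩ := hinvp (θ 0 + 2*π) (by linarith)
  obtain ⟨hb0np, hb0val, hb0max⟩ := hinvm (θ 0 - 2*π) (by linarith)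
  have ha0pos : 0 < θinvp (θ 0 + 2*π) := by
    rcases ha0nn.lt_or_eq with h | h
    · exact h
    · rw [← h] at ha0val
      linarith
  have hb0neg : θinvm (θ 0 - 2*π) < 0 := by
    rcases hb0np.lt_or_eq with h | h
    · exact h
    · rw [h] at hb0val
      linarith
  have hinvmono : ∀ α β, θ 0 ≤ α → α ≤ β → θinvp α ≤ θinvp β := by
    intro α β hα hβ
    obtain ⟨hb0, hbv, -⟩ := hinvp β (le_trans hα hβ)
    obtain ⟨-, -, hamin⟩ := hinvp α hα
    have hmem : α ∈ Icc (θ 0) (θ (θinvp β)) := ⟨hα, by rw [hbv]; exact hβ⟩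
    obtain ⟨z, hz, hzv⟩ := intermediate_value_Icc hb0 hθcont.continuousOn hmem
    exact le_trans (hamin z hz.1 hzv) hz.2
  have hinvmono' : ∀ α β, β ≤ θ 0 → α ≤ β → θinvm α ≤ θinvm β := by
    intro α β hβ hαβ
    obtain ⟨ha0, hav, -⟩ := hinvm α (le_trans hαβ hβ)
    obtain ⟨-, -, hbmax⟩ := hinvm β hβ
    have hmem : β ∈ Icc (θ (θinvm α)) (θ 0) := ⟨by rw [hav]; exact hαβ, hβ⟩
    obtain ⟨z, hz, hzv⟩ := intermediate_value_Icc ha0 hθcont.continuousOn hmem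
    exact le_trans hz.1 (hbmax z hz.2 hzv)
  have hfmono : MonotoneOn ftilde (Ici (θinvp (θ 0 + 2*π))) := by
    intro x hx y hy hxy
    rw [mem_Ici] at hx hy
    rw [hf₁ x hx, hf₁ y hy]
    have hx1 : θ 0 ≤ θ x - π := by
      have := hθm hx
      rw [ha0val] at this
      linarith
    have hy1 : θ 0 ≤ θ y - π := by
      have := hθm hy
      rw [ha0val] at this
      linarith
    have hmono2 : θinvp (θ x - π) ≤ θinvp (θ y - π) :=
      hinvmono _ _ hx1 (by linarith [hθm hxy])
    exact pow_le_pow_left₀ (hpos _) (hmonoP (hinvp _ hx1).1 (hinvp _ hy1).1 hmono2) 2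
  have hfanti : AntitoneOn ftilde (Iic (θinvm (θ 0 - 2*π))) := by
    intro x hx y hy hxy
    rw [mem_Iic] at hx hy
    rw [hf₂ x hx, hf₂ y hy]
    have hx1 : θ x + π ≤ θ 0 := by
      have := hθm hx
      rw [hb0val] at this
      linarith
    have hy1 : θ y + π ≤ θ 0 := by
      have := hθm hy
      rw [hb0val] at this
      linarith
    have hmono2 : θinvm (θ x + π) ≤ θinvm (θ y + π) :=
      hinvmono' _ _ hy1 (by linarith [hθm hxy])
    exact pow_le_pow_left₀ (hpos _) (hmonoM (hinvm _ hx1).1 (hinvm _ hy1).1 hmono2) 2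
  have hfnn : ∀ x, 0 ≤ ftilde x := by
    intro x
    rcases le_or_gt (θinvp (θ 0 + 2*π)) x with h | h
    · rw [hf₁ x h]; positivity
    · rcases le_or_gt x (θinvm (θ 0 - 2*π)) with h2 | h2
      · rw [hf₂ x h2]; positivity
      · rw [hf₃ x h2 h]
  have hmpm : Monotone (fun x => ftilde (max x (θinvp (θ 0 + 2*π)))) :=
    fun x y hxy => hfmono (mem_Ici.mpr (le_max_right _ _)) (mem_Ici.mpr (le_max_right _ _)) (max_le_max hxy le_rfl)
  have hmmm : Antitone (fun x => ftilde (min x (θinvm (θ 0 - 2*π)))) :=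
    fun x y hxy => hfanti (mem_Iic.mpr (min_le_right _ _)) (mem_Iic.mpr (min_le_right _ _)) (min_le_min hxy le_rfl)
  have hfeq : ftilde = fun x => if θinvp (θ 0 + 2*π) ≤ x
      then ftilde (max x (θinvp (θ 0 + 2*π)))
      else if x ≤ θinvm (θ 0 - 2*π) then ftilde (min x (θinvm (θ 0 - 2*π))) else 0 := by
    funext x
    by_cases h1 : θinvp (θ 0 + 2*π) ≤ x
    · rw [if_pos h1, max_eq_left h1]
    · rw [if_neg h1]
      by_cases h2 : x ≤ θinvm (θ 0 - 2*π)
      · rw [if_pos h2, min_eq_left h2]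
      · rw [if_neg h2, hf₃ x (lt_of_not_ge h2) (lt_of_not_ge h1)]
  have hmeas : Measurable ftilde := by
    rw [hfeq]
    exact Measurable.ite measurableSet_Ici hmpm.measurable
      (Measurable.ite measurableSet_Iic hmmm.measurable measurable_const)
  have hfb : ∀ r : ℝ, ∃ C, ∀ x, |x| ≤ r → ftilde x ≤ C := by
    intro r
    refine ⟨max (ftilde (max r (θinvp (θ 0 + 2*π)))) (ftilde (min (-r) (θinvm (θ 0 - 2*π)))), ?_⟩
    intro x hx
    rcases le_or_gt (θinvp (θ 0 + 2*π)) x with h1 | h1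
    · calc ftilde x = ftilde (max x (θinvp (θ 0 + 2*π))) := by rw [max_eq_left h1]
        _ ≤ ftilde (max r (θinvp (θ 0 + 2*π))) := hmpm (le_trans (le_abs_self x) hx)
        _ ≤ _ := le_max_left _ _
    · rcases le_or_gt x (θinvm (θ 0 - 2*π)) with h2 | h2
      · calc ftilde x = ftilde (min x (θinvm (θ 0 - 2*π))) := by rw [min_eq_left h2]
          _ ≤ ftilde (min (-r) (θinvm (θ 0 - 2*π))) :=
              hmmm (by linarith [neg_abs_le x])
          _ ≤ _ := le_max_right _ _
      · rw [hf₃ x h2 h1]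
        exact le_trans (hfnn _) (le_max_left _ _)
  have hfi : ∀ a b : ℝ, IntervalIntegrable ftilde volume a b := by
    intro a b
    rw [intervalIntegrable_iff]
    obtain ⟨C, hC⟩ := hfb (max |a| |b|)
    apply Integrable.mono' (g := fun _ => C)
    · exact integrableOn_const measure_Ioc_lt_top.ne
    · exact hmeas.aestronglyMeasurable.restrict
    · filter_upwards [ae_restrict_mem measurableSet_uIoc] with x hx
      rw [Real.norm_eq_abs, abs_of_nonneg (hfnn x)]
      apply hC
      rw [abs_le]
      obtain ⟨hx1, hx2⟩ := hx
      constructor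
      · have h1 : -(max |a| |b|) ≤ min a b :=
          le_min (by linarith [neg_abs_le a, le_max_left |a| |b|])
            (by linarith [neg_abs_le b, le_max_right |a| |b|])
        exact le_trans h1 hx1.le
      · have h2 : max a b ≤ max |a| |b| :=
          max_le_max (le_abs_self a) (le_abs_self b)
        exact le_trans hx2 h2
  -- the 1D slice estimate
  have claim : ∀ y : ℝ × ℝ,
      (∫ x : ℝ, ftilde x * (u (x, y))^2) ≤ ∫ x : ℝ, (deriv (fun t => u (t, y)) x)^2 := by
    intro y
    show (∫ x : ℝ, ftilde x * ((fun t => u (t, y)) x)^2)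
      ≤ ∫ x : ℝ, (deriv (fun t => u (t, y)) x)^2
    generalize hvdef : (fun t => u (t, y)) = v
    have hvC : ContDiff ℝ 1 v := by
      rw [← hvdef]
      exact hu.comp (ContDiff.prodMk contDiff_id contDiff_const)
    have hvc : Continuous v := hvC.continuous
    have hvsupp : HasCompactSupport v := by
      obtain ⟨R, hR⟩ := husupp.isBounded.subset_closedBall 0
      apply HasCompactSupport.intro (isCompact_Icc (a := -|R|) (b := |R|))
      intro t ht
      by_contra h
      have h2 : (t, y) ∈ tsupport u := subset_tsupport u (by
        rw [← hvdef] at h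
        simpa using h)
      have h3 := hR h2
      rw [Metric.mem_closedBall, dist_zero_right] at h3
      have h4 : |t| ≤ |R| := le_trans (norm_fst_le ((t, y) : ℝ × ℝ × ℝ)) (le_trans h3 (le_abs_self R))
      exact ht ⟨(abs_le.mp h4).1, (abs_le.mp h4).2⟩
    -- polar form of y
    obtain ⟨ρ, φ, hy1, hy2⟩ : ∃ ρ φ : ℝ, y.1 = ρ * Real.cos φ ∧ y.2 = ρ * Real.sin φ := by
      refine ⟨‖(y.1:ℂ) + (y.2:ℂ)*Complex.I‖,
        Complex.arg ((y.1:ℂ) + (y.2:ℂ)*Complex.I), ?_, ?_⟩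
      · have h := Complex.norm_mul_cos_add_sin_mul_I ((y.1:ℂ) + (y.2:ℂ)*Complex.I)
        have h2 := congrArg Complex.re h
        simpa using h2.symm
      · have h := Complex.norm_mul_cos_add_sin_mul_I ((y.1:ℂ) + (y.2:ℂ)*Complex.I)
        have h2 := congrArg Complex.im h
        simpa using h2.symm
    have hident : ∀ t, y.1 * Real.cos (θ t) - y.2 * Real.sin (θ t) = ρ * Real.cos (θ t + φ) := by
      intro t
      rw [hy1, hy2, Real.cos_add]
      ring
    have hvz : ∀ t, Real.cos (θ t + φ) = 0 → v t = 0 := by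
      intro t hcos
      by_contra h
      have hmem : (t, y) ∈ Ω := huΩ (subset_tsupport u (by
        rw [← hvdef] at h
        simpa using h))
      rw [hΩ] at hmem
      obtain ⟨q, hq, heq⟩ := hmem
      have hq1 : q.1 = t := congrArg Prod.fst heq
      have hq2 : q.2.1 * Real.cos (θ q.1) + q.2.2 * Real.sin (θ q.1) = y.1 :=
        congrArg (fun p : ℝ × ℝ × ℝ => p.2.1) heq
      have hq3 : q.2.2 * Real.cos (θ q.1) - q.2.1 * Real.sin (θ q.1) = y.2 :=
        congrArg (fun p : ℝ × ℝ × ℝ => p.2.2) heq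
      rw [hq1] at hq2 hq3
      have hωq : 0 < q.2.1 := hω_half hq.2
      have hkey : y.1 * Real.cos (θ t) - y.2 * Real.sin (θ t) = q.2.1 := by
        rw [← hq2, ← hq3]
        linear_combination q.2.1 * (Real.sin_sq_add_cos_sq (θ t))
      rw [hident t, hcos, mul_zero] at hkey
      linarith
    -- positive side
    have hposside : (∫ t in Ici (0:ℝ), ftilde t * (v t)^2) ≤ ∫ t in Ici (0:ℝ), (deriv v t)^2 :=
      aux_core θ θ' hθ hθ'c hpos hmonoP θinvp hinvp ftilde hf₁
        (fun x hx hxa => hf₃ x (lt_of_lt_of_le hb0neg hx) hxa) hfi v hvC hvsupp φ hvz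
    -- negative side, via reflection
    have hnegside : (∫ t in Ici (0:ℝ), ftilde (-t) * (v (-t))^2)
        ≤ ∫ t in Ici (0:ℝ), (deriv (fun t => v (-t)) t)^2 := by
      have hd : ∀ x : ℝ, HasDerivAt (fun t => -θ (-t)) (θ' (-x)) x := by
        intro x
        have h1 : HasDerivAt (fun t => -θ (-t)) (-(θ' (-x) * -1)) x :=
          ((hθ (-x)).comp x (hasDerivAt_neg' x)).neg
        simpa using h1
      have hmono : MonotoneOn (fun t : ℝ => θ' (-t)) (Set.Ici 0) := by
        intro x hx y hy hxy
        exact hmonoM (mem_Iic.mpr (by rw [mem_Ici] at hy; linarith))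
          (mem_Iic.mpr (by rw [mem_Ici] at hx; linarith)) (by linarith)
      have hinv : ∀ α, (fun t => -θ (-t)) 0 ≤ α →
          0 ≤ (fun α => -θinvm (-α)) α ∧ (fun t => -θ (-t)) ((fun α => -θinvm (-α)) α) = α ∧
          ∀ z, 0 ≤ z → (fun t => -θ (-t)) z = α → (fun α => -θinvm (-α)) α ≤ z := by
        intro α hα
        have hα' : -α ≤ θ 0 := by
          simp only [neg_zero] at hα
          linarith
        obtain ⟨h1, h2, h3⟩ := hinvm (-α) hα'
        refine ⟨by simp only []; linarith, ?_, ?_⟩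
        · simp only [neg_neg]
          rw [h2]
          ring
        · intro z hz hzval
          simp only [] at hzval
          have h4 := h3 (-z) (by linarith) (by linarith)
          simp only []
          linarith
      have hrf₁ : ∀ x, (fun α => -θinvm (-α)) ((fun t => -θ (-t)) 0 + 2 * π) ≤ x →
          (fun x => ftilde (-x)) x =
            ((fun t => θ' (-t)) ((fun α => -θinvm (-α)) ((fun t => -θ (-t)) x - π)))^2 := by
        intro x hx
        simp only [neg_zero] at hx
        have e1 : -(-θ 0 + 2 * π) = θ 0 - 2*π := by ring
        rw [e1] at hx
        have hx2 : -x ≤ θinvm (θ 0 - 2*π) := by linarith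
        simp only []
        rw [hf₂ (-x) hx2]
        have e2 : -(-θ (-x) - π) = θ (-x) + π := by ring
        rw [e2, neg_neg]
      have hrf0 : ∀ x, 0 ≤ x → x < (fun α => -θinvm (-α)) ((fun t => -θ (-t)) 0 + 2 * π) →
          (fun x => ftilde (-x)) x = 0 := by
        intro x hx hxa
        simp only [neg_zero] at hxa
        have e1 : -(-θ 0 + 2 * π) = θ 0 - 2*π := by ring
        rw [e1] at hxa
        simp only []
        exact hf₃ (-x) (by linarith) (by linarith)
      have hrfi : ∀ a b : ℝ, IntervalIntegrable (fun x => ftilde (-x)) volume a b := by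
        intro a b
        have := (IntervalIntegrable.iff_comp_neg (by simp)).mp (hfi (-a) (-b))
        simpa using this
      have hrv : ContDiff ℝ 1 (fun t => v (-t)) := hvC.comp contDiff_neg
      have hrvs : HasCompactSupport (fun t => v (-t)) :=
        hvsupp.comp_homeomorph (Homeomorph.neg ℝ)
      have hrvz : ∀ t, Real.cos ((fun t => -θ (-t)) t + -φ) = 0 → (fun t => v (-t)) t = 0 := by
        intro t hc
        simp only []
        apply hvz (-t)
        rw [← Real.cos_neg]
        convert hc using 2
        ring
      exact aux_core (fun t => -θ (-t)) (fun t => θ' (-t)) hd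
        ((hθ'c.comp continuous_neg)) (fun x => hpos (-x)) hmono (fun α => -θinvm (-α)) hinv
        (fun x => ftilde (-x)) hrf₁ hrf0 hrfi (fun t => v (-t)) hrv hrvs (-φ) hrvz
    -- translate the reflected inequality
    have hneg1 : (∫ t in Ici (0:ℝ), ftilde (-t) * (v (-t))^2)
        = ∫ t in Iic (0:ℝ), ftilde t * (v t)^2 := by
      rw [integral_Ici_eq_integral_Ioi]
      have := integral_comp_neg_Ioi (0:ℝ) (fun t => ftilde t * (v t)^2)
      simpa using this
    have hvd : ∀ x : ℝ, HasDerivAt v (deriv v x) x := fun x =>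
      (hvC.differentiable one_ne_zero x).hasDerivAt
    have hneg2 : (∫ t in Ici (0:ℝ), (deriv (fun t => v (-t)) t)^2)
        = ∫ t in Iic (0:ℝ), (deriv v t)^2 := by
      have hder : ∀ t, deriv (fun t => v (-t)) t = -(deriv v (-t)) := by
        intro t
        have h : HasDerivAt (fun t => v (-t)) (deriv v (-t) * (-1)) t :=
          ((hvd (-t)).comp t (hasDerivAt_neg' t))
        have h2 : HasDerivAt (fun t => v (-t)) (deriv v (-t) * (-1)) t := by
          exact h
        rw [h2.deriv]
        ring
      have heq2 : (fun t => (deriv (fun t => v (-t)) t)^2) = fun t => (deriv v (-t))^2 := by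
        funext t
        rw [hder]
        ring
      rw [heq2, integral_Ici_eq_integral_Ioi]
      have := integral_comp_neg_Ioi (0:ℝ) (fun t => (deriv v t)^2)
      simpa using this
    -- integrability of the full-line integrands
    have hInt1 : Integrable (fun t => ftilde t * (v t)^2) :=
      aux_int1d ftilde v hmeas hfnn hfb hvc hvsupp
    have hInt2 : Integrable (fun t => (deriv v t)^2) := by
      apply (show Continuous (fun t => (deriv v t)^2) from (hvC.continuous_deriv le_rfl).pow 2).integrable_of_hasCompactSupport
      exact (hvsupp.deriv).comp_left (g := fun x : ℝ => x^2) (by simp)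
    have split1 : (∫ x : ℝ, ftilde x * (v x)^2)
        = (∫ t in Iic (0:ℝ), ftilde t * (v t)^2) + ∫ t in Ioi (0:ℝ), ftilde t * (v t)^2 := by
      rw [← compl_Iic]
      exact (integral_add_compl measurableSet_Iic hInt1).symm
    have split2 : (∫ x : ℝ, (deriv v x)^2)
        = (∫ t in Iic (0:ℝ), (deriv v t)^2) + ∫ t in Ioi (0:ℝ), (deriv v t)^2 := by
      rw [← compl_Iic]
      exact (integral_add_compl measurableSet_Iic hInt2).symm
    rw [split1, split2]
    apply add_le_add
    · rw [← hneg1, ← hneg2]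
      exact hnegside
    · rw [← integral_Ici_eq_integral_Ioi, ← integral_Ici_eq_integral_Ioi]
      exact hposside
  -- continuity of the partial derivative in 3D
  have hGc : Continuous (fun p : ℝ × ℝ × ℝ => deriv (fun t => u (t, p.2)) p.1) := by
    have h1 : ∀ p : ℝ × ℝ × ℝ, HasDerivAt (fun t => u (t, p.2))
        ((fderiv ℝ u p) (1, 0, 0)) p.1 := by
      intro p
      have hu' := (hu.differentiable one_ne_zero p).hasFDerivAt
      have hline : HasDerivAt (fun t : ℝ => (t, p.2)) ((1:ℝ), ((0:ℝ), (0:ℝ))) p.1 :=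
        HasDerivAt.prodMk (hasDerivAt_id p.1) (hasDerivAt_const p.1 p.2)
      have h2 : HasFDerivAt u (fderiv ℝ u p) ((fun t : ℝ => (t, p.2)) p.1) := by
        simpa using hu'
      exact h2.comp_hasDerivAt p.1 hline
    have heq : (fun p : ℝ × ℝ × ℝ => deriv (fun t => u (t, p.2)) p.1)
        = fun p => (fderiv ℝ u p) (1, 0, 0) := funext fun p => (h1 p).deriv
    rw [heq]
    exact (hu.continuous_fderiv one_ne_zero).clm_apply continuous_const
  have hGsupp0 : ∀ p : ℝ × ℝ × ℝ, p ∉ tsupport u → deriv (fun t => u (t, p.2)) p.1 = 0 := by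
    intro p hp
    have hopen : IsOpen (tsupport u)ᶜ := (isClosed_tsupport u).isOpen_compl
    have hev : u =ᶠ[𝓝 p] (fun _ => 0) :=
      Filter.eventually_of_mem (hopen.mem_nhds hp)
        (fun q hq => image_eq_zero_of_notMem_tsupport hq)
    have hline : Continuous (fun t : ℝ => (t, p.2)) := continuous_id.prodMk continuous_const
    have htend : Tendsto (fun t : ℝ => (t, p.2)) (𝓝 p.1) (𝓝 p) := by
      have h3 := hline.tendsto p.1
      simpa using h3
    have hev2 : (fun t => u (t, p.2)) =ᶠ[𝓝 p.1] (fun _ => 0) := hev.comp_tendsto htend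
    rw [hev2.deriv_eq]
    simp
  have hGco : HasCompactSupport (fun p : ℝ × ℝ × ℝ => (deriv (fun t => u (t, p.2)) p.1)^2) := by
    apply HasCompactSupport.intro husupp
    intro p hp
    rw [hGsupp0 p hp]
    ring
  have hG : Integrable (fun p : ℝ × ℝ × ℝ => (deriv (fun t => u (t, p.2)) p.1)^2) :=
    ((hGc.pow 2).integrable_of_hasCompactSupport hGco)
  have hF : Integrable (fun p : ℝ × ℝ × ℝ => ftilde p.1 * (u p)^2) := by
    obtain ⟨R, hR⟩ := husupp.isBounded.subset_closedBall 0
    obtain ⟨C, hC⟩ := hfb |R|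
    obtain ⟨D, hD⟩ := husupp.exists_bound_of_continuous hu.continuous
    have hCnn : 0 ≤ C := le_trans (hfnn 0) (hC 0 (by simp))
    apply Integrable.mono'
      (g := (Metric.closedBall (0 : ℝ×ℝ×ℝ) |R|).indicator (fun _ => C * D^2))
    · exact (integrable_indicator_iff measurableSet_closedBall).mpr
        (integrableOn_const measure_closedBall_lt_top.ne)
    · exact ((hmeas.comp measurable_fst).mul ((hu.continuous.pow 2).measurable)).aestronglyMeasurable
    · apply Eventually.of_forall
      intro p
      by_cases hp : p ∈ Metric.closedBall (0:ℝ×ℝ×ℝ) |R|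
      · rw [indicator_of_mem hp]
        rw [Real.norm_eq_abs, abs_mul, abs_of_nonneg (hfnn _), abs_pow]
        apply mul_le_mul _ _ (by positivity) hCnn
        · apply hC
          rw [Metric.mem_closedBall, dist_zero_right] at hp
          exact le_trans (norm_fst_le p) hp
        · exact pow_le_pow_left₀ (abs_nonneg _) (hD p) 2
      · rw [indicator_of_notMem hp]
        have hup : u p = 0 := by
          by_contra h
          apply hp
          exact Metric.closedBall_subset_closedBall (le_abs_self R) (hR (subset_tsupport u h))
        rw [hup]
        simp
  have hprod : (volume : Measure (ℝ × ℝ × ℝ))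
      = (volume : Measure ℝ).prod (volume : Measure (ℝ×ℝ)) := Measure.volume_eq_prod _ _
  have step1 : (∫ p : ℝ×ℝ×ℝ, ftilde p.1 * (u p) ^ 2)
      = ∫ y : ℝ×ℝ, ∫ x : ℝ, ftilde x * (u (x, y))^2 := by
    rw [hprod]
    exact integral_prod_symm _ (hprod ▸ hF)
  have step2 : (∫ p : ℝ×ℝ×ℝ, (deriv (fun t => u (t, p.2)) p.1) ^ 2)
      = ∫ y : ℝ×ℝ, ∫ x : ℝ, (deriv (fun t => u (t, y)) x)^2 := by
    rw [hprod]
    exact integral_prod_symm _ (hprod ▸ hG)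
  rw [step1, step2]
  apply MeasureTheory.integral_mono
  · exact (hprod ▸ hF).integral_prod_right
  · exact (hprod ▸ hG).integral_prod_right
  · intro y
    exact claim y
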